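/- With notation as above, if μ_j is a pole of R_μ = (T + μA)^{-1} of order m with Laurent coefficients A_{−1},…,A_{−m}, then rank(A_{−1}) ≤ d(μ_j), where d(μ_j) is the dimension of the space of tuples (b_{−1},…,b_{−m}) solving the chain: D_{μ_j} b_{−1} = −A b_{−2}, …, D_{μ_j} b_{−m+1} = −A b_{−m}, D_{μ_j} b_{−m} = 0. -/

import Mathlib

open Filter Topology

lemma laurent_vanish {V : Type*} [NormedAddCommGroup V] [NormedSpace ℂ V] (μj : ℂ) :
    ∀ (n : ℕ) (c : Fin n → V) (g : ℂ → V), ContinuousAt g μj →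
    (∀ᶠ μ in 𝓝[≠] μj,
      (∑ k : Fin n, ((μ - μj) ^ (-(k : ℤ) - 1)) • c k) + g μ = 0) →
    ∀ k, c k = 0 := by
  intro n
  induction n with
  | zero => intro c g _ _ k; exact k.elim0
  | succ n ih =>
    intro c g hg hev
    have hne : (𝓝[≠] μj).NeBot := by infer_instance
    -- the continuous auxiliary function
    set ψ : ℂ → V := fun μ =>
      (∑ k : Fin (n+1), ((μ - μj) ^ (n - (k : ℕ)) : ℂ) • c k)
        + ((μ - μj) ^ (n+1)) • g μ with hψ
    have hψ0 : ∀ᶠ μ in 𝓝[≠] μj, ψ μ = 0 := by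
      filter_upwards [hev, self_mem_nhdsWithin] with μ hμ hμne
      have hsub : μ - μj ≠ 0 := sub_ne_zero.mpr hμne
      have : ((μ - μj) ^ (n+1)) • ((∑ k : Fin (n+1), ((μ - μj) ^ (-(k : ℤ) - 1)) • c k) + g μ) = 0 := by
        rw [hμ, smul_zero]
      rw [smul_add, Finset.smul_sum] at this
      rw [hψ]
      convert this using 3 with k
      rw [smul_smul]
      congr 1
      have h1 : ((μ - μj) ^ (n - (k : ℕ)) : ℂ) = (μ - μj) ^ ((n : ℤ) - (k : ℤ)) := by
        rw [← zpow_natCast]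
        congr 1
        omega
      rw [h1, ← zpow_natCast (μ - μj) (n+1), ← zpow_add₀ hsub]
      congr 1
      push_cast
      ring
    have hcont : ContinuousAt ψ μj := by
      apply ContinuousAt.add
      · exact (continuous_finset_sum _ fun k _ =>
          ((continuous_id.sub continuous_const).pow _).smul continuous_const).continuousAt
      · exact ((continuousAt_id.sub continuousAt_const).pow _).smul hg
    have hval : ψ μj = c (Fin.last n) := by
      have hterm : ∀ k : Fin (n+1), k ∈ Finset.univ →
          ((μj - μj) ^ (n - (k : ℕ)) : ℂ) • c k
            = if k = Fin.last n then c (Fin.last n) else 0 := by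
        intro k _
        rcases eq_or_ne k (Fin.last n) with rfl | hk
        · simp [Fin.last]
        · have hkn : (k : ℕ) ≠ n := fun h => hk (Fin.ext (by simpa [Fin.last] using h))
          have : n - (k : ℕ) ≠ 0 := by have := k.isLt; omega
          simp [sub_self, zero_pow this, hk]
      show (∑ k : Fin (n+1), ((μj - μj) ^ (n - (k : ℕ)) : ℂ) • c k)
          + ((μj - μj) ^ (n+1)) • g μj = c (Fin.last n)
      rw [Finset.sum_congr rfl hterm, Finset.sum_ite_eq' Finset.univ (Fin.last n)]
      simp
    have hlast : c (Fin.last n) = 0 := by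
      have t1 : Tendsto ψ (𝓝[≠] μj) (𝓝 (c (Fin.last n))) := by
        rw [← hval]; exact hcont.continuousWithinAt.tendsto
      have t2 : Tendsto ψ (𝓝[≠] μj) (𝓝 0) :=
        Tendsto.congr' (hψ0.mono fun μ h => h.symm) tendsto_const_nhds
      exact tendsto_nhds_unique t1 t2
    -- now reduce to Fin n
    have hev' : ∀ᶠ μ in 𝓝[≠] μj,
        (∑ k : Fin n, ((μ - μj) ^ (-(k : ℤ) - 1)) • c k.castSucc) + g μ = 0 := by
      filter_upwards [hev] with μ hμ
      rw [Fin.sum_univ_castSucc, hlast, smul_zero, add_zero] at hμ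
      simpa using hμ
    have hrest := ih (fun k => c k.castSucc) g hg hev'
    intro k
    rcases Fin.eq_castSucc_or_eq_last k with ⟨i, rfl⟩ | rfl
    · exact hrest i
    · exact hlast

/-- The linear map whose kernel is the space of solution tuples
`(b_{−1}, …, b_{−m})` of the chain
`D b_{−1} = −A' b_{−2}, …, D b_{−m+1} = −A' b_{−m}, D b_{−m} = 0`
(here `b i` stands for `b_{−(i+1)}`). -/
def chainMap {E F : Type*} [NormedAddCommGroup E] [NormedSpace ℂ E]
    [NormedAddCommGroup F] [NormedSpace ℂ F]
    (m : ℕ) (D A' : E →L[ℂ] F) : (Fin m → E) →ₗ[ℂ] (Fin m → F) where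
  toFun b := fun i =>
    D (b i) + (if h : (i : ℕ) + 1 < m then A' (b ⟨(i : ℕ) + 1, h⟩) else 0)
  map_add' x y := by
    funext i
    by_cases h : (i : ℕ) + 1 < m <;> simp [h, map_add] <;> abel
  map_smul' c x := by
    funext i
    by_cases h : (i : ℕ) + 1 < m <;> simp [h, map_smul, smul_add]

/-- If `μⱼ` is a pole of `R_μ = (T + μA)⁻¹` of order `m` with
Laurent coefficients `A_{−1} = B 1, …, A_{−m} = B m`, then
`rank A_{−1} ≤ d(μⱼ)`, where `d(μⱼ)` is the dimension of the space of tuples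
`(b_{−1}, …, b_{−m})` solving the chain
`D_{μⱼ} b_{−1} = −A b_{−2}, …, D_{μⱼ} b_{−m} = 0`. -/
theorem stmt8
    {E F : Type*} [NormedAddCommGroup E] [NormedSpace ℂ E]
    [NormedAddCommGroup F] [NormedSpace ℂ F]
    (T A : E →L[ℂ] F) (μj : ℂ)
    (R : ℂ → F →L[ℂ] E)
    (m : ℕ) (hm : 0 < m)
    (B : ℕ → F →L[ℂ] E)
    (G : ℂ → F →L[ℂ] E) (hG : AnalyticAt ℂ G μj)
    (hrep : ∀ᶠ μ in nhdsWithin μj {μj}ᶜ,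
      R μ = (∑ p ∈ Finset.range m, ((μ - μj) ^ (-(p : ℤ) - 1)) • B (p + 1)) + G μ)
    (hinv : ∀ᶠ μ in nhdsWithin μj {μj}ᶜ,
      (T + μ • A).comp (R μ) = ContinuousLinearMap.id ℂ F) :
    Module.rank ℂ (LinearMap.range (B 1 : F →ₗ[ℂ] E))
      ≤ Module.rank ℂ (LinearMap.ker (chainMap m (T + μj • A) A)) := by
  classical
  obtain ⟨n, rfl⟩ : ∃ n, m = n + 1 := ⟨m - 1, (Nat.succ_pred_eq_of_pos hm).symm⟩
  have key : ∀ y : F,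
      (fun i : Fin (n+1) => B ((i : ℕ) + 1) y) ∈
        LinearMap.ker (chainMap (n+1) (T + μj • A) A) := by
    intro y
    set v : ℕ → E := fun p => B (p + 1) y with hv
    set Cc : Fin (n+1) → F :=
      fun k => chainMap (n+1) (T + μj • A) A (fun i => B ((i : ℕ) + 1) y) k with hCc
    have hCceq : ∀ k : Fin (n+1), Cc k =
        (T + μj • A) (v (k : ℕ)) +
          (if _ : (k : ℕ) + 1 < n + 1 then A (v ((k : ℕ) + 1)) else 0) :=
      fun k => rfl
    have hGy : ContinuousAt (fun μ => G μ y) μj :=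
      (ContinuousLinearMap.apply ℂ E y).continuous.continuousAt.comp hG.continuousAt
    have hg : ContinuousAt
        (fun μ => A (v 0) + T (G μ y) + μ • A (G μ y) - y) μj := by
      apply ContinuousAt.sub _ continuousAt_const
      apply ContinuousAt.add
      · exact continuousAt_const.add (T.continuous.continuousAt.comp hGy)
      · exact continuousAt_id.smul (A.continuous.continuousAt.comp hGy)
    have hev : ∀ᶠ μ in 𝓝[≠] μj,
        (∑ k : Fin (n+1), ((μ - μj) ^ (-(k : ℤ) - 1)) • Cc k)
          + (A (v 0) + T (G μ y) + μ • A (G μ y) - y) = 0 := by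
      filter_upwards [hrep, hinv, self_mem_nhdsWithin] with μ h1 h2 hμ
      have hsub : μ - μj ≠ 0 := sub_ne_zero.mpr hμ
      have hy : (T + μ • A) (R μ y) = y := by
        have := congrArg (fun (L : F →L[ℂ] F) => L y) h2
        simpa using this
      have hR : R μ y =
          (∑ k : Fin (n+1), ((μ - μj) ^ (-(k : ℤ) - 1)) • v (k : ℕ)) + G μ y := by
        rw [h1]
        simp only [ContinuousLinearMap.add_apply, ContinuousLinearMap.coe_sum',
          Finset.sum_apply, ContinuousLinearMap.coe_smul', Pi.smul_apply]
        rw [Fin.sum_univ_eq_sum_range (fun p => ((μ - μj) ^ (-(p : ℤ) - 1)) • v p)]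
      have hsplit : ∀ x : E, (T + μ • A) x = (T + μj • A) x + (μ - μj) • A x := by
        intro x
        simp only [ContinuousLinearMap.add_apply, ContinuousLinearMap.smul_apply,
          ContinuousLinearMap.coe_smul', Pi.smul_apply, sub_smul]
        abel
      have e1 : ∀ k : Fin (n+1),
          ((μ - μj) ^ (-(k : ℤ) - 1)) • ((T + μ • A) (v (k : ℕ)))
            = ((μ - μj) ^ (-(k : ℤ) - 1)) • ((T + μj • A) (v (k : ℕ)))
              + ((μ - μj) ^ (-(k : ℤ))) • (A (v (k : ℕ))) := by
        intro k
        have hmul : (μ - μj) ^ (-(k : ℤ) - 1) * (μ - μj) = (μ - μj) ^ (-(k : ℤ)) := by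
          rw [← zpow_add_one₀ hsub]
          congr 1
          ring
        rw [hsplit, smul_add, smul_smul, hmul]
      have hA : (∑ k : Fin (n+1), ((μ - μj) ^ (-(k : ℤ) - 1)) • ((T + μ • A) (v (k : ℕ))))
          = (∑ k : Fin (n+1), ((μ - μj) ^ (-(k : ℤ) - 1)) • ((T + μj • A) (v (k : ℕ))))
            + (∑ k : Fin (n+1), ((μ - μj) ^ (-(k : ℤ))) • (A (v (k : ℕ)))) := by
        rw [← Finset.sum_add_distrib]
        exact Finset.sum_congr rfl fun k _ => e1 k
      have e2 : (∑ k : Fin (n+1), ((μ - μj) ^ (-(k : ℤ))) • (A (v (k : ℕ))))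
          = A (v 0) + ∑ i : Fin n, ((μ - μj) ^ (-(i : ℤ) - 1)) • (A (v ((i : ℕ) + 1))) := by
        rw [Fin.sum_univ_succ]
        have h0 : ((μ - μj) ^ (-(((0 : Fin (n+1)) : ℕ) : ℤ))) • A (v ((0 : Fin (n+1)) : ℕ))
            = A (v 0) := by simp
        rw [h0]
        congr 1
        refine Finset.sum_congr rfl fun i _ => ?_
        have hexp : (-(((i.succ : Fin (n+1)) : ℕ) : ℤ)) = -((i : ℕ) : ℤ) - 1 := by
          push_cast [Fin.val_succ]
          ring
        rw [hexp, Fin.val_succ]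
      have e3 : (∑ k : Fin (n+1), ((μ - μj) ^ (-(k : ℤ) - 1)) • Cc k)
          = (∑ k : Fin (n+1), ((μ - μj) ^ (-(k : ℤ) - 1)) • ((T + μj • A) (v (k : ℕ))))
            + ∑ i : Fin n, ((μ - μj) ^ (-(i : ℤ) - 1)) • (A (v ((i : ℕ) + 1))) := by
        rw [Finset.sum_congr rfl fun k _ => by rw [hCceq k, smul_add],
          Finset.sum_add_distrib]
        congr 1
        rw [Fin.sum_univ_castSucc]
        have hlast : (if _ : ((Fin.last n : Fin (n+1)) : ℕ) + 1 < n + 1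
            then A (v (((Fin.last n : Fin (n+1)) : ℕ) + 1)) else 0) = 0 := by
          rw [dif_neg]
          simp
        rw [hlast, smul_zero, add_zero]
        refine Finset.sum_congr rfl fun i _ => ?_
        have hcond : ((i.castSucc : Fin (n+1)) : ℕ) + 1 < n + 1 := by
          have := i.isLt
          simp only [Fin.coe_castSucc]
          omega
        rw [dif_pos hcond, Fin.coe_castSucc]
      have hy2 : (∑ k : Fin (n+1), ((μ - μj) ^ (-(k : ℤ) - 1)) • ((T + μ • A) (v (k : ℕ))))
          + (T (G μ y) + μ • A (G μ y)) = y := by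
        have expand : (T + μ • A)
            ((∑ k : Fin (n+1), ((μ - μj) ^ (-(k : ℤ) - 1)) • v (k : ℕ)) + G μ y)
            = (∑ k : Fin (n+1), ((μ - μj) ^ (-(k : ℤ) - 1)) • ((T + μ • A) (v (k : ℕ))))
              + (T (G μ y) + μ • A (G μ y)) := by
          have t2 : (T + μ • A) (G μ y) = T (G μ y) + μ • A (G μ y) := by
            simp [ContinuousLinearMap.add_apply, ContinuousLinearMap.smul_apply]
          rw [map_add, map_sum, t2,
            Finset.sum_congr rfl fun (k : Fin (n+1)) _ =>
              map_smul (T + μ • A) ((μ - μj) ^ (-(k : ℤ) - 1)) (v (k : ℕ))]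
        rw [← expand, ← hR, hy]
      set S1 := ∑ k : Fin (n+1), ((μ - μj) ^ (-(k : ℤ) - 1)) • ((T + μj • A) (v (k : ℕ)))
        with hS1
      set S2 := ∑ i : Fin n, ((μ - μj) ^ (-(i : ℤ) - 1)) • (A (v ((i : ℕ) + 1))) with hS2
      set w1 := T (G μ y) with hw1
      set w2 := μ • A (G μ y) with hw2
      have hy3 : S1 + (A (v 0) + S2) + (w1 + w2) = y := by
        rw [← e2, ← hA]
        exact hy2
      rw [e3]
      calc S1 + S2 + (A (v 0) + w1 + w2 - y)
          = (S1 + (A (v 0) + S2) + (w1 + w2)) - y := by abel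
        _ = y - y := by rw [hy3]
        _ = 0 := sub_self y
    have := laurent_vanish μj (n+1) Cc
      (fun μ => A (v 0) + T (G μ y) + μ • A (G μ y) - y) hg hev
    exact funext fun i => this i
  let π : (Fin (n+1) → E) →ₗ[ℂ] E := LinearMap.proj 0
  have hsub : LinearMap.range (B 1 : F →ₗ[ℂ] E) ≤
      (LinearMap.ker (chainMap (n+1) (T + μj • A) A)).map π := by
    rintro x ⟨y, rfl⟩
    exact ⟨fun i => B ((i : ℕ) + 1) y, key y, rfl⟩
  calc Module.rank ℂ (LinearMap.range (B 1 : F →ₗ[ℂ] E))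
      ≤ Module.rank ℂ ((LinearMap.ker (chainMap (n+1) (T + μj • A) A)).map π) :=
        Submodule.rank_mono hsub
    _ ≤ Module.rank ℂ (LinearMap.ker (chainMap (n+1) (T + μj • A) A)) :=
        rank_map_le π _
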